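/- arXiv:2602.20455 — 2 statements merged into one kernel-verified Lean document; each statement's English description precedes it below -/
import Mathlib

section
/- The Hermitian curve y^q + y = x^{q+1} has exactly q^3 affine F_{q^2}-rational points, i.e., |{(a,b) ∈ F_{q^2}^2 : b^q + b = a^{q+1}}| = q^3. -/
open Polynomial Finset

lemma root_bound_aux {F : Type} [Field F] [DecidableEq F] (q : ℕ) (hq : 2 ≤ q) (c : F)
    (s : Finset F) (h : ∀ x ∈ s, x ^ q = c * x) : s.card ≤ q := by
  set P : F[X] := X ^ q - C c * X with hP
  have hdeg : P.natDegree = q := by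
    rw [hP, natDegree_sub_eq_left_of_natDegree_lt, natDegree_X_pow]
    calc (C c * X).natDegree ≤ (X : F[X]).natDegree := natDegree_C_mul_le c X
      _ = 1 := natDegree_X
      _ < (X ^ q : F[X]).natDegree := by rw [natDegree_X_pow]; omega
  have hP0 : P ≠ 0 := by
    intro h0
    rw [h0, natDegree_zero] at hdeg
    omega
  have hsub : s ⊆ P.roots.toFinset := by
    intro x hx
    rw [Multiset.mem_toFinset, mem_roots hP0]
    simp [hP, IsRoot, h x hx]
  calc s.card ≤ P.roots.toFinset.card := Finset.card_le_card hsub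
    _ ≤ Multiset.card P.roots := Multiset.toFinset_card_le _
    _ ≤ P.natDegree := P.card_roots'
    _ = q := hdeg

theorem hermitian_affine_point_count (p n q : ℕ) (hp : p.Prime) (hn : 0 < n) (hq : q = p ^ n)
    (F : Type) [Field F] [Fintype F] [CharP F p]
    (hcard : Fintype.card F = q ^ 2) :
    {v : F × F | v.2 ^ q + v.2 = v.1 ^ (q + 1)}.ncard = q ^ 3 := by
  classical
  haveI : Fact p.Prime := ⟨hp⟩
  have hq2 : 2 ≤ q := by
    rw [hq]
    calc 2 ≤ p := hp.two_le
      _ = p ^ 1 := (pow_one p).symm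
      _ ≤ p ^ n := Nat.pow_le_pow_right hp.pos hn
  have hq0 : 0 < q := by omega
  set f : F → F := fun b => b ^ q + b with hf
  have hFq : ∀ x : F, x ^ (q * q) = x := fun x => by
    have := FiniteField.pow_card x
    rwa [hcard, pow_two] at this
  have hfrob : ∀ x y : F, (x + y) ^ q = x ^ q + y ^ q := fun x y => by
    subst hq; exact add_pow_char_pow ..
  have hfrobs : ∀ x y : F, (x - y) ^ q = x ^ q - y ^ q := fun x y => by
    subst hq; exact sub_pow_char_pow ..
  have hfsub : ∀ x y : F, f (x - y) = f x - f y := by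
    intro x y; simp only [hf, hfrobs]; ring
  set K := (Finset.univ.filter fun b : F => f b = 0).card with hK
  -- all fibers over the image have the same cardinality K
  have fiber_eq : ∀ c ∈ Finset.univ.image f,
      (Finset.univ.filter fun b : F => f b = c).card = K := by
    intro c hc
    obtain ⟨b0, -, hb0⟩ := Finset.mem_image.1 hc
    rw [hK]
    apply Finset.card_nbij' (fun b => b - b0) (fun b => b + b0)
    · intro a ha
      simp only [Finset.mem_coe, Finset.mem_filter, Finset.mem_univ, true_and] at ha ⊢
      rw [hfsub, ha, hb0, sub_self]
    · intro a ha
      simp only [Finset.mem_coe, Finset.mem_filter, Finset.mem_univ, true_and] at ha ⊢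
      simp only [hf] at ha ⊢
      rw [hfrob]
      linear_combination ha + hb0
    · intro a _; ring
    · intro a _; ring
  -- the fundamental counting identity
  have hsum := Finset.card_eq_sum_card_fiberwise
    (f := f) (s := (Finset.univ : Finset F)) (t := Finset.univ.image f)
    (fun x _ => Finset.mem_image_of_mem f (Finset.mem_univ x))
  rw [Finset.card_univ, hcard, Finset.sum_congr rfl fiber_eq, Finset.sum_const,
    smul_eq_mul] at hsum
  set m := (Finset.univ.image f).card with hm
  -- bounds
  have hmq : m ≤ q := by
    apply root_bound_aux q hq2 1
    intro c hc
    obtain ⟨b, -, rfl⟩ := Finset.mem_image.1 hc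
    rw [one_mul, hf]
    simp only
    rw [hfrob, ← pow_mul, hFq]
    ring
  have hKq : K ≤ q := by
    apply root_bound_aux q hq2 (-1)
    intro c hc
    simp only [Finset.mem_filter, Finset.mem_univ, true_and, hf] at hc
    have : c ^ q = -c := by linear_combination hc
    rw [this]; ring
  -- conclude K = q and m = q
  have hKeq : K = q := by
    have h1 : q * q ≤ q * K := by
      calc q * q = q ^ 2 := (pow_two q).symm
        _ = m * K := hsum
        _ ≤ q * K := Nat.mul_le_mul_right K hmq
    have := Nat.le_of_mul_le_mul_left h1 hq0
    omega
  have hmeq : m = q := by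
    rw [hKeq] at hsum
    have : m * q = q * q := by rw [← hsum, pow_two]
    exact Nat.eq_of_mul_eq_mul_right hq0 this
  -- the image is exactly the set of fixed points of x ↦ x^q
  have hT : Finset.univ.image f = Finset.univ.filter (fun c : F => c ^ q = c) := by
    apply Finset.eq_of_subset_of_card_le
    · intro c hc
      obtain ⟨b, -, rfl⟩ := Finset.mem_image.1 hc
      simp only [Finset.mem_filter, Finset.mem_univ, true_and, hf]
      rw [hfrob, ← pow_mul, hFq]
      ring
    · rw [← hm, hmeq]
      apply root_bound_aux q hq2 1
      intro c hc
      simp only [Finset.mem_filter, Finset.mem_univ, true_and] at hc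
      rw [one_mul, hc]
  -- every a^(q+1) is in the image
  have hfib : ∀ a : F, (Finset.univ.filter fun b : F => f b = a ^ (q + 1)).card = q := by
    intro a
    have hmem : a ^ (q + 1) ∈ Finset.univ.image f := by
      rw [hT]
      simp only [Finset.mem_filter, Finset.mem_univ, true_and]
      rw [← pow_mul]
      have : (q + 1) * q = q * q + q := by ring
      rw [this, pow_add, hFq, ← pow_succ']
    rw [fiber_eq _ hmem, hKeq]
  -- final assembly
  have hcoe : {v : F × F | v.2 ^ q + v.2 = v.1 ^ (q + 1)}.ncard
      = Fintype.card {v : F × F // v.2 ^ q + v.2 = v.1 ^ (q + 1)} := by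
    rw [← Nat.card_coe_set_eq, Nat.card_eq_fintype_card]
    rfl
  rw [hcoe,
    Fintype.card_congr (Equiv.subtypeProdEquivSigmaSubtype
      (fun (a b : F) => b ^ q + b = a ^ (q + 1))),
    Fintype.card_sigma]
  have heach : ∀ a : F, Fintype.card {b : F // b ^ q + b = a ^ (q + 1)} = q := by
    intro a
    rw [Fintype.card_subtype]
    exact hfib a
  rw [Finset.sum_congr rfl (fun a _ => heach a), Finset.sum_const, smul_eq_mul,
    Finset.card_univ, hcard]
  ring
end

section
/- Let C be a linear [n,k] code over F_q with generator matrix G = [I_k | A] and parity-check matrix H = [-Aᵀ | I_{n-k}], and minimum distance d with t = ⌊(d-1)/2⌋. For a received word y = c + e with c ∈ C and wt(e) ≤ t, the first k coordinates of y equal those of c if and only if wt(H yᵀ) ≤ t. -/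
section aux
variable {F : Type} [Field F] {k m : ℕ} (A : Matrix (Fin k) (Fin m) F)

lemma Hent (v : (Fin k ⊕ Fin m) → F) (j : Fin m) :
    Matrix.mulVec (Matrix.fromCols (-A.transpose) (1 : Matrix (Fin m) (Fin m) F)) v j
      = -(∑ i, A i j * v (Sum.inl i)) + v (Sum.inr j) := by
  simp [Matrix.mulVec, Matrix.fromCols, dotProduct, Fintype.sum_sum_type,
    Matrix.one_apply, Finset.sum_ite_eq, Matrix.transpose_apply]

lemma centl (u : Fin k → F) (i : Fin k) :
    Matrix.vecMul u (Matrix.fromCols (1 : Matrix (Fin k) (Fin k) F) A) (Sum.inl i) = u i := by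
  simp [Matrix.vecMul, Matrix.fromCols, dotProduct, Matrix.one_apply,
    Finset.sum_ite_eq]

lemma centr (u : Fin k → F) (j : Fin m) :
    Matrix.vecMul u (Matrix.fromCols (1 : Matrix (Fin k) (Fin k) F) A) (Sum.inr j)
      = ∑ i, u i * A i j := by
  simp [Matrix.vecMul, Matrix.fromCols, dotProduct]

end aux

theorem syndrome_weight_criterion (F : Type) [Field F] (k m : ℕ)
    (A : Matrix (Fin k) (Fin m) F) (d : ℕ)
    (C : Set ((Fin k ⊕ Fin m) → F))
    (hC : C = {v | ∃ u : Fin k → F, v = Matrix.vecMul u (Matrix.fromCols 1 A)})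
    (hd : ∀ c ∈ C, c ≠ 0 → d ≤ {i | c i ≠ 0}.ncard)
    (t : ℕ) (ht : t = (d - 1) / 2)
    (c e : (Fin k ⊕ Fin m) → F) (hc : c ∈ C) (he : {i | e i ≠ 0}.ncard ≤ t)
    (y : (Fin k ⊕ Fin m) → F) (hy : y = c + e) :
    (∀ i : Fin k, y (Sum.inl i) = c (Sum.inl i)) ↔
      {j : Fin m | Matrix.mulVec (Matrix.fromCols (-A.transpose) 1) y j ≠ 0}.ncard ≤ t := by
  obtain ⟨u, hu⟩ := hC ▸ hc
  have hcL : ∀ i, c (Sum.inl i) = u i := fun i => by rw [hu, centl]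
  have hcR : ∀ j, c (Sum.inr j) = ∑ i, u i * A i j := fun j => by rw [hu, centr]
  have hHy : ∀ j, Matrix.mulVec (Matrix.fromCols (-A.transpose) 1) y j
      = -(∑ i, A i j * e (Sum.inl i)) + e (Sum.inr j) := by
    intro j
    rw [Hent, hy]
    simp only [Pi.add_apply, hcL, hcR j]
    rw [Finset.sum_congr rfl (fun x _ => mul_add (A x j) (u x) (e (Sum.inl x))),
      Finset.sum_add_distrib,
      Finset.sum_congr rfl (fun x _ => mul_comm (u x) (A x j))]
    ring
  constructor
  · intro h
    have heL : ∀ i, e (Sum.inl i) = 0 := by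
      intro i
      have := h i
      rw [hy] at this; simpa using this
    have hsub : {j : Fin m | Matrix.mulVec (Matrix.fromCols (-A.transpose) 1) y j ≠ 0}
        = {j : Fin m | e (Sum.inr j) ≠ 0} := by
      ext j; rw [Set.mem_setOf_eq, Set.mem_setOf_eq, hHy j]; simp [heL]
    rw [hsub]
    refine le_trans ?_ he
    exact Set.ncard_le_ncard_of_injOn Sum.inr (fun j hj => hj)
      (fun a _ b _ hab => by simpa using hab) (Set.toFinite _)
  · intro hwt
    let s : Fin m → F := fun j => -(∑ i, A i j * e (Sum.inl i)) + e (Sum.inr j)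
    set c' : (Fin k ⊕ Fin m) → F :=
      Matrix.vecMul (fun i => e (Sum.inl i)) (Matrix.fromCols 1 A) with hc'
    have hc'C : c' ∈ C := hC ▸ ⟨_, rfl⟩
    have hc'L : ∀ i, c' (Sum.inl i) = e (Sum.inl i) := fun i => centl A _ i
    have hc'R : ∀ j, c' (Sum.inr j) = e (Sum.inr j) - s j := by
      intro j
      show _ = e (Sum.inr j) - (-(∑ i, A i j * e (Sum.inl i)) + e (Sum.inr j))
      rw [hc', centr,
        Finset.sum_congr rfl (fun x _ => mul_comm (e (Sum.inl x)) (A x j))]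
      ring
    have hsupp : {i | c' i ≠ 0} ⊆ {i | e i ≠ 0} ∪ (Sum.inr '' {j | s j ≠ 0}) := by
      rintro (i | j) hi
      · left; simpa [hc'L] using hi
      · simp only [Set.mem_setOf_eq, hc'R] at hi
        by_cases hej : e (Sum.inr j) ≠ 0
        · left; exact hej
        · right
          refine ⟨j, ?_, rfl⟩
          intro hsj
          apply hi
          simp [hsj, not_not.mp hej]
    have hcard : {i | c' i ≠ 0}.ncard ≤ 2 * t := by
      calc {i | c' i ≠ 0}.ncard
          ≤ ({i | e i ≠ 0} ∪ (Sum.inr '' {j | s j ≠ 0})).ncard :=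
            Set.ncard_le_ncard hsupp (Set.toFinite _)
        _ ≤ {i | e i ≠ 0}.ncard + (Sum.inr '' {j | s j ≠ 0}).ncard :=
            Set.ncard_union_le _ _
        _ ≤ t + t := by
            refine add_le_add he ?_
            rw [Set.ncard_image_of_injective _ Sum.inr_injective]
            calc {j | s j ≠ 0}.ncard
                = {j | Matrix.mulVec (Matrix.fromCols (-A.transpose) 1) y j ≠ 0}.ncard := by
                  congr 1; ext j; simp only [Set.mem_setOf_eq, hHy j]; exact Iff.rfl
              _ ≤ t := hwt
        _ = 2 * t := by ring
    have hc'0 : c' = 0 := by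
      by_contra h0
      have hdle := hd c' hc'C h0
      have h2t : 2 * t < d := by
        rcases Nat.eq_zero_or_pos d with hd0 | hd1
        · subst hd0
          -- then t = 0, so c' has empty support, contradiction with h0
          exfalso
          apply h0
          have ht0 : t = 0 := by simp [ht]
          have : {i | c' i ≠ 0}.ncard = 0 := le_antisymm (by omega) (Nat.zero_le _)
          have hemp : {i | c' i ≠ 0} = ∅ :=
            (Set.ncard_eq_zero (Set.toFinite _)).mp this
          funext i
          by_contra hci
          exact Set.eq_empty_iff_forall_notMem.mp hemp i hci
        · have : 2 * t ≤ d - 1 := by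
            rw [ht]; omega
          omega
      omega
    intro i
    have : e (Sum.inl i) = 0 := by rw [← hc'L, hc'0]; rfl
    rw [hy]; simp [this]
end
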